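/- For an indeterminate (or generic) q and x in a field, det(((x;q)_{i+j+m})_{i,j=0}^{n-1}) = q^{2·binom(n,3) + m·binom(n,2)} · x^{binom(n,2)} · ∏_{k=0}^{n-1} (x;q)_{k+m} · (q;q)_k, for all n ≥ 1 and m ≥ 0. -/

import Mathlib

/-- The q-Pochhammer symbol `(x; q)_n = ∏_{j=0}^{n-1} (1 - q^j x)`. -/
def qPoch {R : Type*} [CommRing R] (q x : R) (n : ℕ) : R :=
  ∏ j ∈ Finset.range n, (1 - q ^ j * x)

lemma sum_range_id' (n : ℕ) : ∑ j ∈ Finset.range n, j = n.choose 2 := by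
  induction n with
  | zero => simp
  | succ n ih =>
      rw [Finset.sum_range_succ, ih, Nat.choose_succ_succ, Nat.choose_one_right, Nat.add_comm]

lemma sum_range_choose2 (n : ℕ) : ∑ j ∈ Finset.range n, j.choose 2 = n.choose 3 := by
  induction n with
  | zero => simp
  | succ n ih =>
      rw [Finset.sum_range_succ, ih, Nat.choose_succ_succ n 2, Nat.add_comm]

lemma sum_i_mul (n : ℕ) : ∑ i ∈ Finset.range n, i * (n - 1 - i) = n.choose 3 := by
  induction n with
  | zero => simp
  | succ n ih =>
      have h1 : ∀ i ∈ Finset.range n, i * (n + 1 - 1 - i) = i * (n - 1 - i) + i := by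
        intro i hi
        rw [Finset.mem_range] at hi
        have : n + 1 - 1 - i = (n - 1 - i) + 1 := by omega
        rw [this, Nat.mul_add, Nat.mul_one]
      rw [Finset.sum_range_succ, Finset.sum_congr rfl h1, Finset.sum_add_distrib, ih,
        sum_range_id']
      have : n + 1 - 1 - n = 0 := by omega
      rw [this, Nat.mul_zero, Nat.add_zero, Nat.choose_succ_succ n 2, Nat.add_comm]

section Parts
variable {F : Type*} [Field F] (q x : F) (n m : ℕ)

lemma partC (a : ℕ → F) (ha : ∀ l, a l = q ^ (m + l) * x) :
    ∏ j : Fin n, ∏ l ∈ Finset.range (j : ℕ), (-(a l))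
      = (-1 : F) ^ n.choose 2 * q ^ (m * n.choose 2 + n.choose 3) * x ^ n.choose 2 := by
  have hC1 : ∀ J : ℕ, ∏ l ∈ Finset.range J, (-(a l))
      = (-1 : F) ^ J * q ^ (J * m + J.choose 2) * x ^ J := by
    intro J
    have e : ∀ l ∈ Finset.range J, -(a l) = (-1) * (q ^ (m + l) * x) := by
      intro l _; rw [ha]; ring
    rw [Finset.prod_congr rfl e, Finset.prod_mul_distrib, Finset.prod_mul_distrib,
      Finset.prod_const, Finset.prod_const, Finset.card_range, Finset.prod_pow_eq_pow_sum,
      Finset.sum_add_distrib, Finset.sum_const, Finset.card_range, smul_eq_mul, sum_range_id']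
    ring
  rw [Fin.prod_univ_eq_prod_range (fun j => ∏ l ∈ Finset.range j, (-(a l))) n,
    Finset.prod_congr rfl (fun j _ => hC1 j), Finset.prod_mul_distrib, Finset.prod_mul_distrib,
    Finset.prod_pow_eq_pow_sum, Finset.prod_pow_eq_pow_sum, Finset.prod_pow_eq_pow_sum,
    Finset.sum_add_distrib, ← Finset.sum_mul, sum_range_id', sum_range_choose2,
    Nat.mul_comm (n.choose 2) m]

lemma partV :
    ∏ i : Fin n, ∏ j ∈ Finset.Ioi i, (q ^ (j : ℕ) - q ^ (i : ℕ))
      = (-1 : F) ^ n.choose 2 * q ^ n.choose 3 * ∏ k ∈ Finset.range n, qPoch q q k := by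
  have hV1 : ∀ i : Fin n, ∏ j ∈ Finset.Ioi i, (q ^ (j : ℕ) - q ^ (i : ℕ))
      = (-1 : F) ^ (n - 1 - i.1) * q ^ (i.1 * (n - 1 - i.1)) * qPoch q q (n - 1 - i.1) := by
    intro i
    have e : ∀ (j : Fin n), j ∈ Finset.Ioi i →
        q ^ (j : ℕ) - q ^ (i : ℕ) = (-1) * q ^ (i : ℕ) * (1 - q ^ (j.1 - i.1 - 1) * q) := by
      intro j hj
      have hij0 : i < j := Finset.mem_Ioi.mp hj
      have hij : i.1 < j.1 := hij0
      have h5 : q ^ (j : ℕ) = q ^ (i : ℕ) * (q ^ (j.1 - i.1 - 1) * q) := by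
        rw [← pow_succ, ← pow_add]; congr 1; omega
      rw [h5]; ring
    rw [Finset.prod_congr rfl e, Finset.prod_mul_distrib, Finset.prod_mul_distrib,
      Finset.prod_const, Finset.prod_const, Fin.card_Ioi, pow_mul]
    congr 1
    rw [qPoch, show ∏ j ∈ Finset.Ioi i, (1 - q ^ (j.1 - i.1 - 1) * q)
        = ∏ t ∈ (Finset.Ioi i).map Fin.valEmbedding, (1 - q ^ (t - i.1 - 1) * q) from
      (Finset.prod_map (Finset.Ioi i) Fin.valEmbedding (fun t => 1 - q ^ (t - i.1 - 1) * q)).symm, Fin.map_valEmbedding_Ioi, ← Finset.Ico_add_one_left_eq_Ioo,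
      Finset.prod_Ico_eq_prod_range, show n - (i.1 + 1) = n - 1 - i.1 from by omega]
    apply Finset.prod_congr rfl
    intro t _
    have : i.1 + 1 + t - i.1 - 1 = t := by omega
    rw [this]
  rw [Finset.prod_congr rfl (fun i _ => hV1 i),
    Fin.prod_univ_eq_prod_range
      (fun k => (-1 : F) ^ (n - 1 - k) * q ^ (k * (n - 1 - k)) * qPoch q q (n - 1 - k)) n,
    Finset.prod_mul_distrib, Finset.prod_mul_distrib, Finset.prod_pow_eq_pow_sum,
    Finset.prod_pow_eq_pow_sum, sum_i_mul, Finset.sum_range_reflect (fun j => j) n,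
    sum_range_id', Finset.prod_range_reflect (fun k => qPoch q q k) n]

end Parts

open Polynomial in
lemma det_qPoch_field {F : Type*} [Field F] (q x : F) (hq : q ≠ 0) (hx : x ≠ 0) (n m : ℕ) :
    Matrix.det (Matrix.of (fun i j : Fin n => qPoch q x (i.1 + j.1 + m)))
      = q ^ (2 * n.choose 3 + m * n.choose 2) * x ^ n.choose 2 *
          ∏ k ∈ Finset.range n, qPoch q x (k + m) * qPoch q q k := by
  set a : ℕ → F := fun l => q ^ (m + l) * x with ha
  have ha0 : ∀ l, a l ≠ 0 := fun l => mul_ne_zero (pow_ne_zero _ hq) hx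
  set p : Fin n → F[X] := fun j => ∏ l ∈ Finset.range (j : ℕ), (X - C (a l)⁻¹) with hp
  have hmonic : ∀ j : Fin n, (p j).Monic :=
    fun j => monic_prod_of_monic _ _ fun l _ => monic_X_sub_C _
  have hdeg : ∀ j : Fin n, (p j).natDegree = (j : ℕ) := by
    intro j
    rw [hp, natDegree_prod_of_monic _ _ (fun l _ => monic_X_sub_C _)]
    simp [natDegree_X_sub_C]
  have key : ∀ i j : Fin n, qPoch q x (i.1 + j.1 + m)
      = qPoch q x (i.1 + m) *
        ((∏ l ∈ Finset.range (j : ℕ), (-(a l))) *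
          (Matrix.of fun i j : Fin n => (p j).eval (q ^ (i : ℕ))) i j) := by
    intro i j
    have h1 : i.1 + j.1 + m = (i.1 + m) + j.1 := by ring
    have heval : (Matrix.of fun i j : Fin n => (p j).eval (q ^ (i : ℕ))) i j
        = ∏ l ∈ Finset.range (j : ℕ), (q ^ (i : ℕ) - (a l)⁻¹) := by
      simp [hp, eval_prod]
    rw [heval, ← Finset.prod_mul_distrib]
    have h2 : ∀ l ∈ Finset.range (j : ℕ),
        (-(a l)) * (q ^ (i : ℕ) - (a l)⁻¹) = 1 - q ^ ((i.1 + m) + l) * x := by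
      intro l _
      have h3 : q ^ ((i.1 + m) + l) = q ^ (m + l) * q ^ (i : ℕ) := by
        rw [← pow_add]; congr 1; ring
      calc (-(a l)) * (q ^ (i : ℕ) - (a l)⁻¹)
          = a l * (a l)⁻¹ - a l * q ^ (i : ℕ) := by ring
        _ = 1 - q ^ ((i.1 + m) + l) * x := by
            rw [mul_inv_cancel₀ (ha0 l), ha, h3]; ring
    rw [Finset.prod_congr rfl h2, h1]
    show qPoch q x ((i.1 + m) + j.1) = _
    rw [qPoch, Finset.prod_range_add]
    rfl
  have h4 : Matrix.det (Matrix.of fun i j : Fin n => qPoch q x (i.1 + j.1 + m))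
      = (∏ i : Fin n, qPoch q x (i.1 + m)) *
        ((∏ j : Fin n, ∏ l ∈ Finset.range (j : ℕ), (-(a l))) *
          Matrix.det (Matrix.of fun i j : Fin n => (p j).eval (q ^ (i : ℕ)))) := by
    rw [← Matrix.det_mul_row, ← Matrix.det_mul_column]
    congr 1
    ext i j
    exact key i j
  rw [h4, ← Matrix.det_eval_matrixOfPolynomials_eq_det_vandermonde
      (fun i : Fin n => q ^ (i : ℕ)) p hdeg hmonic, Matrix.det_vandermonde,
      partC q x n m a (fun l => by rw [ha]), partV q n,
      Fin.prod_univ_eq_prod_range (fun k => qPoch q x (k + m)) n]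
  have hs : (-1 : F) ^ n.choose 2 * (-1 : F) ^ n.choose 2 = 1 := by
    rw [← mul_pow]; norm_num
  have hqq : q ^ (m * n.choose 2 + n.choose 3) * q ^ n.choose 3
      = q ^ (2 * n.choose 3 + m * n.choose 2) := by
    rw [← pow_add]; congr 1; ring
  calc (∏ k ∈ Finset.range n, qPoch q x (k + m)) *
        ((-1 : F) ^ n.choose 2 * q ^ (m * n.choose 2 + n.choose 3) * x ^ n.choose 2 *
          ((-1 : F) ^ n.choose 2 * q ^ n.choose 3 * ∏ k ∈ Finset.range n, qPoch q q k))
      = ((-1 : F) ^ n.choose 2 * (-1 : F) ^ n.choose 2) *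
          (q ^ (m * n.choose 2 + n.choose 3) * q ^ n.choose 3) * x ^ n.choose 2 *
          ((∏ k ∈ Finset.range n, qPoch q x (k + m)) * ∏ k ∈ Finset.range n, qPoch q q k) := by
        ring
    _ = q ^ (2 * n.choose 3 + m * n.choose 2) * x ^ n.choose 2 *
          ∏ k ∈ Finset.range n, qPoch q x (k + m) * qPoch q q k := by
        rw [hs, hqq, one_mul, ← Finset.prod_mul_distrib]

lemma map_qPoch {R S : Type*} [CommRing R] [CommRing S] (f : R →+* S) (q x : R) (n : ℕ) :
    f (qPoch q x n) = qPoch (f q) (f x) n := by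
  simp [qPoch]

lemma push_det {R S : Type*} [CommRing R] [CommRing S] (f : R →+* S) (q x : R) (n m : ℕ) :
    f (Matrix.det (Matrix.of (fun i j : Fin n => qPoch q x (i.1 + j.1 + m))))
      = Matrix.det (Matrix.of (fun i j : Fin n => qPoch (f q) (f x) (i.1 + j.1 + m))) := by
  rw [RingHom.map_det]
  congr 1
  ext i j
  simp [Matrix.map_apply, map_qPoch]

lemma push_rhs {R S : Type*} [CommRing R] [CommRing S] (f : R →+* S) (q x : R) (n m : ℕ) :
    f (q ^ (2 * n.choose 3 + m * n.choose 2) * x ^ n.choose 2 *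
        ∏ k ∈ Finset.range n, qPoch q x (k + m) * qPoch q q k)
      = (f q) ^ (2 * n.choose 3 + m * n.choose 2) * (f x) ^ n.choose 2 *
        ∏ k ∈ Finset.range n, qPoch (f q) (f x) (k + m) * qPoch (f q) (f q) k := by
  simp [map_qPoch]

theorem stmt_15 {F : Type*} [Field F] (q x : F) (n m : ℕ) (hn : 1 ≤ n) :
    Matrix.det (Matrix.of (fun i j : Fin n => qPoch q x (i.1 + j.1 + m)))
      = q ^ (2 * n.choose 3 + m * n.choose 2) * x ^ n.choose 2 *
          ∏ k ∈ Finset.range n, qPoch q x (k + m) * qPoch q q k := by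
  classical
  set R := MvPolynomial (Fin 2) ℤ with hR
  set K := FractionRing R with hK
  set Q : R := MvPolynomial.X 0 with hQdef
  set Y : R := MvPolynomial.X 1 with hYdef
  have hinj : Function.Injective (algebraMap R K) := IsFractionRing.injective R K
  have hQ : (algebraMap R K) Q ≠ 0 :=
    (map_ne_zero_iff _ hinj).mpr (MvPolynomial.X_ne_zero _)
  have hY : (algebraMap R K) Y ≠ 0 :=
    (map_ne_zero_iff _ hinj).mpr (MvPolynomial.X_ne_zero _)
  have hgen := det_qPoch_field ((algebraMap R K) Q) ((algebraMap R K) Y) hQ hY n m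
  have hRid : Matrix.det (Matrix.of (fun i j : Fin n => qPoch Q Y (i.1 + j.1 + m)))
      = Q ^ (2 * n.choose 3 + m * n.choose 2) * Y ^ n.choose 2 *
          ∏ k ∈ Finset.range n, qPoch Q Y (k + m) * qPoch Q Q k := by
    apply hinj
    rw [push_det (algebraMap R K) Q Y n m, push_rhs (algebraMap R K) Q Y n m]
    exact hgen
  set ψ : R →+* F := (MvPolynomial.eval₂Hom (Int.castRingHom F) ![q, x] : R →+* F) with hψ
  have hψQ : ψ Q = q := by
    rw [hψ, hQdef, MvPolynomial.eval₂Hom_X']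
    simp
  have hψY : ψ Y = x := by
    rw [hψ, hYdef, MvPolynomial.eval₂Hom_X']
    simp
  have e1 := push_det ψ Q Y n m
  have e2 := push_rhs ψ Q Y n m
  rw [hψQ, hψY] at e1 e2
  rw [← e1, hRid, e2]
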